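/- Let H : ℂ → ℂ be given by H(h) = −(1/27)·(h−4)³/h² (with the junk value H(0) = 0 coming from division by zero). Let n ≥ 1 and z ∈ ℂ be such that the k-th iterate H^[k](z) is nonzero for every 0 ≤ k < n. If the derivative of the n-th iterate H^[n] at z vanishes, then H^[n](z) = 0 or H^[n](z) = 1. In other words, every finite critical value of every iterate H^(n) lies in {0, 1}. -/

import Mathlib

/-- The hessian dynamical system in the coordinate `h = j/(2⁶·3³)`; note the
junk value `Hdyn 0 = 0` coming from Lean's division by zero. -/
noncomputable def Hdyn (h : ℂ) : ℂ := -(1 / 27) * (h - 4) ^ 3 / h ^ 2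

lemma hdyn_zero : Hdyn 0 = 0 := by simp [Hdyn]

lemma hdyn_one : Hdyn 1 = 1 := by norm_num [Hdyn]

lemma hdyn_four : Hdyn 4 = 0 := by norm_num [Hdyn]

lemma hdyn_neg8 : Hdyn (-8) = 1 := by
  norm_num [Hdyn]

lemma hasDerivAt_hdyn (z : ℂ) (hz : z ≠ 0) :
    HasDerivAt Hdyn (-(1 / 27) * (z - 4) ^ 2 * (z + 8) / z ^ 3) z := by
  have hnum : HasDerivAt (fun h : ℂ => -(1 / 27) * (h - 4) ^ 3)
      (-(1 / 27) * (3 * (z - 4) ^ 2 * 1)) z :=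
    (((hasDerivAt_id z).sub_const 4).pow 3).const_mul _
  have hden : HasDerivAt (fun h : ℂ => h ^ 2) (2 * z ^ 1) z := hasDerivAt_pow 2 z
  have h := hnum.div hden (pow_ne_zero 2 hz)
  refine h.congr_deriv ?_
  have hz2 : (z : ℂ) ^ 2 ≠ 0 := pow_ne_zero _ hz
  field_simp
  ring

lemma crit_hdyn (z : ℂ) (hz : z ≠ 0) (h : deriv Hdyn z = 0) :
    Hdyn z = 0 ∨ Hdyn z = 1 := by
  have hd := hasDerivAt_hdyn z hz
  rw [hd.deriv] at h
  have hz3 : z ^ 3 ≠ 0 := pow_ne_zero _ hz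
  rw [div_eq_zero_iff] at h
  rcases h with h | h
  · have : (z - 4) ^ 2 = 0 ∨ (z + 8) = 0 := by
      rcases mul_eq_zero.mp h with h' | h'
      · left
        rcases mul_eq_zero.mp h' with h'' | h''
        · norm_num at h''
        · exact h''
      · right; exact h'
    rcases this with h' | h'
    · have : z = 4 := by
        have := pow_eq_zero_iff (n := 2) (by norm_num) |>.mp h'
        linear_combination this
      subst this; left; exact hdyn_four
    · have : z = -8 := by linear_combination h'
      subst this; right; exact hdyn_neg8
  · exact absurd h hz3

lemma diff_iter : ∀ n (z : ℂ), (∀ k, k < n → Hdyn^[k] z ≠ 0) →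
    DifferentiableAt ℂ (Hdyn^[n]) z := by
  intro n
  induction n with
  | zero => intro z _; simpa using differentiableAt_id'
  | succ n ih =>
    intro z hz
    rw [Function.iterate_succ]
    have hz0 : z ≠ 0 := by simpa using hz 0 (Nat.succ_pos n)
    have hH : DifferentiableAt ℂ Hdyn z := (hasDerivAt_hdyn z hz0).differentiableAt
    have horb : ∀ k, k < n → Hdyn^[k] (Hdyn z) ≠ 0 := by
      intro k hk
      have := hz (k + 1) (by omega)
      rwa [Function.iterate_succ_apply] at this
    exact (ih (Hdyn z) horb).comp z hH

lemma main_aux : ∀ n (z : ℂ), (∀ k, k < n → Hdyn^[k] z ≠ 0) →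
    deriv (Hdyn^[n]) z = 0 → Hdyn^[n] z = 0 ∨ Hdyn^[n] z = 1 := by
  intro n
  induction n with
  | zero =>
    intro z _ hcrit
    simp only [Function.iterate_zero, deriv_id] at hcrit
    exact absurd hcrit one_ne_zero
  | succ n ih =>
    intro z hz hcrit
    have hz0 : z ≠ 0 := by simpa using hz 0 (Nat.succ_pos n)
    have hH : DifferentiableAt ℂ Hdyn z := (hasDerivAt_hdyn z hz0).differentiableAt
    have horb : ∀ k, k < n → Hdyn^[k] (Hdyn z) ≠ 0 := by
      intro k hk
      have := hz (k + 1) (by omega)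
      rwa [Function.iterate_succ_apply] at this
    have hdiff : DifferentiableAt ℂ (Hdyn^[n]) (Hdyn z) := diff_iter n (Hdyn z) horb
    rw [Function.iterate_succ] at hcrit
    rw [deriv_comp z hdiff hH] at hcrit
    rcases mul_eq_zero.mp hcrit with h | h
    · have := ih (Hdyn z) horb h
      rwa [Function.iterate_succ_apply]
    · rcases crit_hdyn z hz0 h with h' | h'
      · left
        rw [Function.iterate_succ_apply, h', Function.iterate_fixed hdyn_zero]
      · right
        rw [Function.iterate_succ_apply, h', Function.iterate_fixed hdyn_one]

theorem critical_values_of_iterates (n : ℕ) (hn : 1 ≤ n) (z : ℂ)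
    (horb : ∀ k, k < n → Hdyn^[k] z ≠ 0)
    (hcrit : deriv (Hdyn^[n]) z = 0) :
    Hdyn^[n] z = 0 ∨ Hdyn^[n] z = 1 :=
  main_aux n z horb hcrit
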